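/- For every integer k ≥ 1 the following two identities hold (stated in cross-multiplied form): T_{4k+6}·(F_{4k+2} + 3) = (T_{4k+2} + 1)·F_{4k+6}, and (T_{4k} − 1)·F_{4k+4} = T_{4k+4}·(F_{4k} − 3). -/
import Mathlib


/-- `T n = Σ_{k=1}^{⌊n/2⌋} (−1)^{k+1} F_{n−2k}`. -/
def T (n : ℕ) : ℤ := ∑ k ∈ Finset.Icc 1 (n / 2), (-1 : ℤ) ^ (k + 1) * (Nat.fib (n - 2 * k) : ℤ)

lemma Taux (n : ℕ) :
    T n = ∑ i ∈ Finset.range (n / 2), (-1 : ℤ) ^ i * (Nat.fib (n - 2 - 2 * i) : ℤ) := by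
  unfold T
  rw [← Finset.Ico_add_one_right_eq_Icc, Finset.sum_Ico_eq_sum_range]
  apply Finset.sum_congr (by norm_num)
  intro i _
  have h1 : (-1 : ℤ) ^ (1 + i + 1) = (-1) ^ i := by
    rw [show 1 + i + 1 = i + 2 from by ring, pow_add]; ring
  have h2 : n - 2 * (1 + i) = n - 2 - 2 * i := by omega
  rw [h1, h2]

lemma Trec (n : ℕ) : T (n + 2) = (Nat.fib n : ℤ) - T n := by
  rw [Taux, Taux]
  have h : (n + 2) / 2 = n / 2 + 1 := by omega
  rw [h, Finset.sum_range_succ']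
  have h0 : n + 2 - 2 - 2 * 0 = n := by omega
  rw [h0]
  have : ∀ i ∈ Finset.range (n / 2),
      (-1 : ℤ) ^ (i + 1) * (Nat.fib (n + 2 - 2 - 2 * (i + 1)) : ℤ)
        = -((-1 : ℤ) ^ i * (Nat.fib (n - 2 - 2 * i) : ℤ)) := by
    intro i _
    have h2 : n + 2 - 2 - 2 * (i + 1) = n - 2 - 2 * i := by omega
    rw [h2, pow_succ]; ring
  rw [Finset.sum_congr rfl this, Finset.sum_neg_distrib]
  simp; ring

lemma Tclosed (m : ℕ) : T (2 * m + 2) = (Nat.fib m : ℤ) * (Nat.fib (m + 1) : ℤ) := by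
  induction m with
  | zero => simp [T]
  | succ m ih =>
    have h : 2 * (m + 1) + 2 = (2 * m + 2) + 2 := by ring
    rw [h, Trec, ih]
    have hf : (Nat.fib (2 * m + 2) : ℤ) = (Nat.fib m : ℤ) * (Nat.fib (m + 1) : ℤ)
        + (Nat.fib (m + 1) : ℤ) * (Nat.fib (m + 2) : ℤ) := by
      have := Nat.fib_add m (m + 1)
      rw [show m + (m + 1) + 1 = 2 * m + 2 from by ring,
        show m + 1 + 1 = m + 2 from rfl] at this
      exact_mod_cast this
    rw [hf, show m + 1 + 1 = m + 2 from rfl]; ring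

lemma cassini (j : ℕ) :
    (Nat.fib (2 * j + 3) : ℤ) ^ 2 - (Nat.fib (2 * j + 2) : ℤ) * (Nat.fib (2 * j + 3) : ℤ)
      - (Nat.fib (2 * j + 2) : ℤ) ^ 2 = 1 := by
  induction j with
  | zero => norm_num
  | succ j ih =>
    have e4 : (Nat.fib (2 * (j + 1) + 2) : ℤ)
        = (Nat.fib (2 * j + 2) : ℤ) + (Nat.fib (2 * j + 3) : ℤ) := by
      rw [show 2 * (j + 1) + 2 = (2 * j + 2) + 2 from by ring, Nat.fib_add_two]; push_cast; ring
    have e5 : (Nat.fib (2 * (j + 1) + 3) : ℤ)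
        = (Nat.fib (2 * j + 3) : ℤ) + (Nat.fib (2 * (j + 1) + 2) : ℤ) := by
      rw [show 2 * (j + 1) + 3 = (2 * j + 3) + 2 from by ring, Nat.fib_add_two]; push_cast
      rw [show 2 * j + 3 + 1 = 2 * (j + 1) + 2 from by ring]
    rw [e5, e4]
    linear_combination ih

theorem T_cross_multiplied_identities (k : ℕ) (hk : 1 ≤ k) :
    T (4 * k + 6) * ((Nat.fib (4 * k + 2) : ℤ) + 3)
      = (T (4 * k + 2) + 1) * (Nat.fib (4 * k + 6) : ℤ) ∧
    (T (4 * k) - 1) * (Nat.fib (4 * k + 4) : ℤ)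
      = T (4 * k + 4) * ((Nat.fib (4 * k) : ℤ) - 3) := by
  obtain ⟨j, rfl⟩ : ∃ j, k = j + 1 := ⟨k - 1, by omega⟩
  set a : ℤ := (Nat.fib (2 * j + 2) : ℤ) with ha
  set b : ℤ := (Nat.fib (2 * j + 3) : ℤ) with hb
  have cas : b ^ 2 - a * b - a ^ 2 = 1 := cassini j
  -- consecutive fibs in terms of a, b
  have f4 : (Nat.fib (2 * j + 4) : ℤ) = a + b := by
    rw [show 2 * j + 4 = (2 * j + 2) + 2 from by ring, Nat.fib_add_two]; push_cast
    rw [ha, hb, show 2 * j + 2 + 1 = 2 * j + 3 from by ring]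
  have f5 : (Nat.fib (2 * j + 5) : ℤ) = a + 2 * b := by
    rw [show 2 * j + 5 = (2 * j + 3) + 2 from by ring, Nat.fib_add_two]; push_cast
    rw [hb, show 2 * j + 3 + 1 = 2 * j + 4 from by ring, f4]; ring
  have f1 : (Nat.fib (2 * j + 1) : ℤ) = b - a := by
    have := Nat.fib_add_two (n := 2 * j + 1)
    rw [show 2 * j + 1 + 2 = 2 * j + 3 from by ring,
      show 2 * j + 1 + 1 = 2 * j + 2 from by ring] at this
    rw [ha, hb, this]; push_cast; ring
  -- T values
  have T0 : T (4 * (j + 1)) = (b - a) * a := by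
    rw [show 4 * (j + 1) = 2 * (2 * j + 1) + 2 from by ring, Tclosed,
      show 2 * j + 1 + 1 = 2 * j + 2 from by ring, f1, ha]
  have T2 : T (4 * (j + 1) + 2) = a * b := by
    rw [show 4 * (j + 1) + 2 = 2 * (2 * j + 2) + 2 from by ring, Tclosed,
      show 2 * j + 2 + 1 = 2 * j + 3 from by ring, ha, hb]
  have T4 : T (4 * (j + 1) + 4) = b * (a + b) := by
    rw [show 4 * (j + 1) + 4 = 2 * (2 * j + 3) + 2 from by ring, Tclosed,
      show 2 * j + 3 + 1 = 2 * j + 4 from by ring, hb, f4]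
  have T6 : T (4 * (j + 1) + 6) = (a + b) * (a + 2 * b) := by
    rw [show 4 * (j + 1) + 6 = 2 * (2 * j + 4) + 2 from by ring, Tclosed,
      show 2 * j + 4 + 1 = 2 * j + 5 from by ring, f4, f5]
  -- big fibs via fib_add : fib (m + n + 1) = fib m * fib n + fib (m+1) * fib (n+1)
  have fibadd : ∀ m n : ℕ, (Nat.fib (m + n + 1) : ℤ)
      = (Nat.fib m : ℤ) * (Nat.fib n : ℤ) + (Nat.fib (m + 1) : ℤ) * (Nat.fib (n + 1) : ℤ) := by
    intro m n
    have := Nat.fib_add m n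
    push_cast [this]; ring
  have F0 : (Nat.fib (4 * (j + 1)) : ℤ) = (b - a) * a + a * b := by
    have := fibadd (2 * j + 1) (2 * j + 2)
    rw [show 2 * j + 1 + (2 * j + 2) + 1 = 4 * (j + 1) from by ring,
      show 2 * j + 1 + 1 = 2 * j + 2 from by ring,
      show 2 * j + 2 + 1 = 2 * j + 3 from by ring] at this
    rw [this, f1, ← ha, ← hb]
  have F2 : (Nat.fib (4 * (j + 1) + 2) : ℤ) = a * b + b * (a + b) := by
    have := fibadd (2 * j + 2) (2 * j + 3)
    rw [show 2 * j + 2 + (2 * j + 3) + 1 = 4 * (j + 1) + 2 from by ring,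
      show 2 * j + 2 + 1 = 2 * j + 3 from by ring,
      show 2 * j + 3 + 1 = 2 * j + 4 from by ring] at this
    rw [this, f4, ← ha, ← hb]
  have F4 : (Nat.fib (4 * (j + 1) + 4) : ℤ) = b * (a + b) + (a + b) * (a + 2 * b) := by
    have := fibadd (2 * j + 3) (2 * j + 4)
    rw [show 2 * j + 3 + (2 * j + 4) + 1 = 4 * (j + 1) + 4 from by ring,
      show 2 * j + 3 + 1 = 2 * j + 4 from by ring,
      show 2 * j + 4 + 1 = 2 * j + 5 from by ring] at this
    rw [this, f4, f5, ← hb]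
  have F6 : (Nat.fib (4 * (j + 1) + 6) : ℤ)
      = (a + b) * (a + 2 * b) + (a + 2 * b) * (2 * a + 3 * b) := by
    have := fibadd (2 * j + 4) (2 * j + 5)
    rw [show 2 * j + 4 + (2 * j + 5) + 1 = 4 * (j + 1) + 6 from by ring,
      show 2 * j + 4 + 1 = 2 * j + 5 from by ring] at this
    have f6 : (Nat.fib (2 * j + 5 + 1) : ℤ) = 2 * a + 3 * b := by
      rw [show 2 * j + 5 + 1 = (2 * j + 4) + 2 from by ring, Nat.fib_add_two]; push_cast
      rw [show 2 * j + 4 + 1 = 2 * j + 5 from by ring, f4, f5]; ring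
    rw [this, f4, f5, f6]
  constructor
  · rw [T6, T2, F2, F6]
    linear_combination (a * b + 2 * b ^ 2) * cas
  · rw [T0, T4, F0, F4]
    linear_combination (a ^ 2 + a * b) * cas
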